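/- Let β > 0 and suppose J(r) = (1/L) V(|r|/L) where V : [0,∞) → ℝ is Lipschitz continuous with Lipschitz constant ℓ. For 0 ≤ j ≤ k ≤ M−1 define f^l_{jk}(σ) = exp(−β Δ_{jk}J(σ)) − 1. Then for every configuration σ ∈ S_N and every pair j ≤ k, |f^l_{jk}(σ)| ≤ exp(2βQ³ℓ/L²) − 1. -/

import Mathlib

open Finset

/-- The spin value of a site: `true ↦ +1`, `false ↦ -1`. -/
def spin (b : Bool) : ℤ := if b then 1 else -1

/-- The coarse cell `C_k = {kQ, …, (k+1)Q - 1}` inside the lattice `Fin (M*Q)`. -/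
def cell (M Q : ℕ) (k : Fin M) : Finset (Fin (M * Q)) :=
  univ.filter (fun x => x.val / Q = k.val)

/-- The coarse-graining map `F(σ)(k) = Σ_{x ∈ C_k} σ(x)`. -/
def cg (M Q : ℕ) (σ : Fin (M * Q) → Bool) (k : Fin M) : ℤ :=
  ∑ x ∈ cell M Q k, spin (σ x)

/-- The long-range Hamiltonian `H^l(σ) = -(1/2) Σ_{x ≠ y} J(x-y) σ(x) σ(y)`. -/
noncomputable def Hlong (M Q : ℕ) (J : ℤ → ℝ) (σ : Fin (M * Q) → Bool) : ℝ :=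
  -(1 / 2) * ∑ x : Fin (M * Q), ∑ y ∈ univ.filter (fun y => y ≠ x),
    J ((x.val : ℤ) - (y.val : ℤ)) * (spin (σ x) : ℝ) * (spin (σ y) : ℝ)

/-- Cell-averaged couplings `J̄(k,l)`. -/
noncomputable def Jbar (M Q : ℕ) (J : ℤ → ℝ) (k l : Fin M) : ℝ :=
  if k = l then
    (∑ x ∈ cell M Q k, ∑ y ∈ (cell M Q k).filter (fun y => y ≠ x),
        J ((x.val : ℤ) - (y.val : ℤ))) / ((Q : ℝ) * ((Q : ℝ) - 1))
  else
    (∑ x ∈ cell M Q k, ∑ y ∈ cell M Q l, J ((x.val : ℤ) - (y.val : ℤ))) / ((Q : ℝ) ^ 2)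

/-- The coarse-grained long-range Hamiltonian `H̄^{l,(0)}(η)`. -/
noncomputable def Hlong0 (M Q : ℕ) (J : ℤ → ℝ) (η : Fin M → ℤ) : ℝ :=
  -(1 / 2) * (∑ k : Fin M, ∑ l ∈ univ.filter (fun l => l ≠ k),
      Jbar M Q J k l * (η k : ℝ) * (η l : ℝ))
  - (1 / 2) * ∑ k : Fin M, Jbar M Q J k k * ((η k : ℝ) ^ 2 - (Q : ℝ))

/-- The pair term `Δ_{kl}J(σ)` of the decomposition of `H^l - H̄^{l,(0)} ∘ F`. -/
noncomputable def DeltaJ (M Q : ℕ) (J : ℤ → ℝ) (k l : Fin M)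
    (σ : Fin (M * Q) → Bool) : ℝ :=
  -(1 / 2) * (2 - if k = l then 1 else 0) *
    ∑ x ∈ cell M Q k, ∑ y ∈ (cell M Q l).filter (fun y => y ≠ x),
      (J ((x.val : ℤ) - (y.val : ℤ)) - Jbar M Q J k l) * (spin (σ x) : ℝ) * (spin (σ y) : ℝ)

lemma mem_cell {M Q : ℕ} (hQ : 0 < Q) {k : Fin M} {x : Fin (M*Q)} :
    x ∈ cell M Q k ↔ k.val * Q ≤ x.val ∧ x.val < k.val * Q + Q := by
  simp only [cell, mem_filter, mem_univ, true_and]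
  constructor
  · intro h
    rw [← h]
    refine ⟨Nat.div_mul_le_self _ _, ?_⟩
    have h1 : x.val / Q < x.val / Q + 1 := Nat.lt_succ_self _
    have h2 : x.val < (x.val/Q + 1) * Q := (Nat.div_lt_iff_lt_mul hQ).mp h1
    rw [Nat.add_mul, one_mul] at h2
    exact h2
  · rintro ⟨h1, h2⟩
    exact Nat.div_eq_of_lt_le h1 (by rw [Nat.add_mul, one_mul]; exact h2)

lemma card_cell {M Q : ℕ} (hQ : 0 < Q) (k : Fin M) : (cell M Q k).card = Q := by
  apply Finset.card_eq_of_bijective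
    (fun i hi => (⟨k.val * Q + i, by
      have h : k.val * Q + i < (k.val + 1) * Q := by rw [Nat.add_mul, one_mul]; omega
      exact h.trans_le (Nat.mul_le_mul_right Q k.isLt)⟩ : Fin (M*Q)))
  · intro a ha
    rw [mem_cell hQ] at ha
    exact ⟨a.val - k.val * Q, by omega, by ext; simp; omega⟩
  · intro i hi
    rw [mem_cell hQ]
    simp; omega
  · intro i j hi hj h
    simpa [Fin.mk.injEq] using h


section
variable {L l : ℝ} (hL : 0 < L) (hl : 0 ≤ l) {V : ℝ → ℝ}
  (hV : ∀ a b : ℝ, 0 ≤ a → 0 ≤ b → |V a - V b| ≤ l * |a - b|)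
  {J : ℤ → ℝ} (hJ : ∀ r : ℤ, J r = (1 / L) * V (|(r : ℝ)| / L))

include hL hl hV hJ

lemma J_diff (r r' : ℤ) : |J r - J r'| ≤ l / L^2 * |(r : ℝ) - (r' : ℝ)| := by
  rw [hJ, hJ, ← mul_sub, abs_mul]
  have h1 : |V (|(r:ℝ)|/L) - V (|(r':ℝ)|/L)| ≤ l * |(|(r:ℝ)|/L - |(r':ℝ)|/L)| :=
    hV _ _ (by positivity) (by positivity)
  have h2 : |(|(r:ℝ)|/L - |(r':ℝ)|/L)| = |(|(r:ℝ)| - |(r':ℝ)|)| / L := by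
    rw [← sub_div, abs_div, abs_of_pos hL]
  have h3 : |(|(r:ℝ)| - |(r':ℝ)|)| ≤ |(r:ℝ) - (r':ℝ)| := abs_abs_sub_abs_le_abs_sub _ _
  have : |1/L| = 1/L := abs_of_pos (by positivity)
  rw [this]
  calc 1/L * |V (|(r:ℝ)|/L) - V (|(r':ℝ)|/L)| ≤ 1/L * (l * (|(r:ℝ) - (r':ℝ)| / L)) := by
        apply mul_le_mul_of_nonneg_left _ (by positivity)
        refine h1.trans ?_
        rw [h2]
        exact mul_le_mul_of_nonneg_left (by apply div_le_div_of_nonneg_right h3 hL.le) hl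
    _ = l / L^2 * |(r:ℝ) - (r':ℝ)| := by ring

lemma pair_diff {M Q : ℕ} (hQ : 0 < Q) {j k : Fin M} {x x' y y' : Fin (M*Q)}
    (hx : x ∈ cell M Q j) (hx' : x' ∈ cell M Q j)
    (hy : y ∈ cell M Q k) (hy' : y' ∈ cell M Q k) :
    |J ((x.val : ℤ) - y.val) - J ((x'.val : ℤ) - y'.val)| ≤ l / L^2 * (2*Q) := by
  refine (J_diff hL hl hV hJ _ _).trans ?_
  apply mul_le_mul_of_nonneg_left _ (by positivity)
  have dist : ∀ (m : Fin M) (z z' : Fin (M*Q)), z ∈ cell M Q m → z' ∈ cell M Q m →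
      |(z.val : ℝ) - z'.val| ≤ Q := by
    intro m z z' hz hz'
    rw [mem_cell hQ] at hz hz'
    have a1 : ((m.val:ℝ) * Q) ≤ z.val := by exact_mod_cast hz.1
    have a2 : (z.val:ℝ) < (m.val:ℝ) * Q + Q := by exact_mod_cast hz.2
    have a3 : ((m.val:ℝ) * Q) ≤ z'.val := by exact_mod_cast hz'.1
    have a4 : (z'.val:ℝ) < (m.val:ℝ) * Q + Q := by exact_mod_cast hz'.2
    rw [abs_le]; constructor <;> linarith
  have h1 := dist j x x' hx hx'
  have h2 := dist k y y' hy hy'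
  calc |(((x.val : ℤ) - y.val : ℤ) : ℝ) - (((x'.val : ℤ) - y'.val : ℤ) : ℝ)|
      = |((x.val:ℝ) - x'.val) - ((y.val:ℝ) - y'.val)| := by push_cast; ring_nf
    _ ≤ |(x.val:ℝ) - x'.val| + |(y.val:ℝ) - y'.val| := abs_sub _ _
    _ ≤ Q + Q := add_le_add h1 h2
    _ = 2*Q := by ring
end

lemma avg_bound {ι : Type*} (s : Finset ι) (t : ι → ℝ) (A b n : ℝ) (hn : 0 < n)
    (hcard : (s.card : ℝ) = n) (ht : ∀ i ∈ s, |A - t i| ≤ b) :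
    |A - (∑ i ∈ s, t i)/n| ≤ b := by
  have hb : 0 ≤ b := by
    rcases Finset.eq_empty_or_nonempty s with h | ⟨i, hi⟩
    · exfalso; rw [h] at hcard; simp at hcard; exact hn.ne' hcard.symm
    · exact (abs_nonneg _).trans (ht i hi)
  have h : A - (∑ i ∈ s, t i)/n = (∑ i ∈ s, (A - t i))/n := by
    rw [Finset.sum_sub_distrib, Finset.sum_const, nsmul_eq_mul, hcard]
    field_simp
  rw [h, abs_div, abs_of_pos hn, div_le_iff₀ hn]
  calc |∑ i ∈ s, (A - t i)| ≤ ∑ i ∈ s, |A - t i| := Finset.abs_sum_le_sum_abs _ _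
    _ ≤ ∑ i ∈ s, b := Finset.sum_le_sum ht
    _ = n * b := by rw [Finset.sum_const, nsmul_eq_mul, hcard]
    _ = b * n := mul_comm _ _

section
variable {L l : ℝ} (hL : 0 < L) (hl : 0 ≤ l) {V : ℝ → ℝ}
  (hV : ∀ a b : ℝ, 0 ≤ a → 0 ≤ b → |V a - V b| ≤ l * |a - b|)
  {J : ℤ → ℝ} (hJ : ∀ r : ℤ, J r = (1 / L) * V (|(r : ℝ)| / L))
include hL hl hV hJ

lemma Jbar_diff {M Q : ℕ} (hQ2 : 2 ≤ Q) {j k : Fin M} {x y : Fin (M*Q)}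
    (hx : x ∈ cell M Q j) (hy : y ∈ cell M Q k) :
    |J ((x.val : ℤ) - y.val) - Jbar M Q J j k| ≤ l / L^2 * (2*Q) := by
  have hQ0 : 0 < Q := by omega
  by_cases hjk : j = k
  · subst hjk
    rw [Jbar, if_pos rfl, Finset.sum_sigma']
    apply avg_bound
    · have : (2:ℝ) ≤ Q := by exact_mod_cast hQ2
      nlinarith
    · rw [Finset.card_sigma]
      have : ∀ x' ∈ cell M Q j, ((cell M Q j).filter (fun y' => y' ≠ x')).card = Q - 1 := by
        intro x' hx'
        rw [Finset.filter_ne', Finset.card_erase_of_mem hx', card_cell hQ0]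
      rw [Finset.sum_congr rfl this, Finset.sum_const, card_cell hQ0, smul_eq_mul]
      push_cast [Nat.cast_sub (by omega : 1 ≤ Q)]
      ring
    · rintro ⟨x', y'⟩ hp
      rw [Finset.mem_sigma] at hp
      exact pair_diff hL hl hV hJ hQ0 hx hp.1 hy (Finset.mem_filter.mp hp.2).1
  · rw [Jbar, if_neg hjk, ← Finset.sum_product']
    apply avg_bound
    · positivity
    · rw [Finset.card_product, card_cell hQ0, card_cell hQ0]
      push_cast; ring
    · rintro ⟨x', y'⟩ hp
      rw [Finset.mem_product] at hp
      exact pair_diff hL hl hV hJ hQ0 hx hp.1 hy hp.2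
end



lemma spin_abs (b : Bool) : |((spin b : ℤ) : ℝ)| = 1 := by cases b <;> simp [spin]

section
variable {L l : ℝ} (hL : 0 < L) (hl : 0 ≤ l) {V : ℝ → ℝ}
  (hV : ∀ a b : ℝ, 0 ≤ a → 0 ≤ b → |V a - V b| ≤ l * |a - b|)
  {J : ℤ → ℝ} (hJ : ∀ r : ℤ, J r = (1 / L) * V (|(r : ℝ)| / L))
include hL hl hV hJ

lemma delta_bound {M Q : ℕ} (hQ2 : 2 ≤ Q) (j k : Fin M) (σ : Fin (M * Q) → Bool) :
    |DeltaJ M Q J j k σ| ≤ 2 * (Q:ℝ)^3 * l / L^2 := by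
  have hQ0 : 0 < Q := by omega
  set b : ℝ := l / L^2 * (2*Q) with hb
  have hb0 : 0 ≤ b := by positivity
  rw [DeltaJ, abs_mul]
  have hc : |(-(1/2) * (2 - if j = k then (1:ℝ) else 0))| ≤ 1 := by
    split <;> rw [abs_le] <;> norm_num
  calc |(-(1/2) * (2 - if j = k then (1:ℝ) else 0))| * |∑ x ∈ cell M Q j,
        ∑ y ∈ (cell M Q k).filter (fun y => y ≠ x),
          (J ((x.val : ℤ) - (y.val : ℤ)) - Jbar M Q J j k) * (spin (σ x) : ℝ) * (spin (σ y) : ℝ)|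
      ≤ 1 * |∑ x ∈ cell M Q j, ∑ y ∈ (cell M Q k).filter (fun y => y ≠ x),
          (J ((x.val : ℤ) - (y.val : ℤ)) - Jbar M Q J j k) * (spin (σ x) : ℝ) * (spin (σ y) : ℝ)| :=
        mul_le_mul_of_nonneg_right hc (abs_nonneg _)
    _ ≤ ∑ x ∈ cell M Q j, ∑ y ∈ (cell M Q k).filter (fun y => y ≠ x),
          |(J ((x.val : ℤ) - (y.val : ℤ)) - Jbar M Q J j k) * (spin (σ x) : ℝ) * (spin (σ y) : ℝ)| := by
        rw [one_mul]
        exact (Finset.abs_sum_le_sum_abs _ _).trans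
          (Finset.sum_le_sum fun x _ => Finset.abs_sum_le_sum_abs _ _)
    _ ≤ ∑ x ∈ cell M Q j, ∑ y ∈ (cell M Q k).filter (fun y => y ≠ x), b := by
        refine Finset.sum_le_sum fun x hx => Finset.sum_le_sum fun y hy => ?_
        rw [abs_mul, abs_mul, spin_abs, spin_abs, mul_one, mul_one]
        exact Jbar_diff hL hl hV hJ hQ2 hx (Finset.mem_filter.mp hy).1
    _ ≤ ∑ _x ∈ cell M Q j, (Q:ℝ) * b := by
        refine Finset.sum_le_sum fun x _ => ?_
        rw [Finset.sum_const, nsmul_eq_mul]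
        have hcard : (((cell M Q k).filter (fun y => y ≠ x)).card : ℝ) ≤ Q := by
          exact_mod_cast (Finset.card_filter_le (cell M Q k) _).trans_eq (card_cell hQ0 k)
        exact mul_le_mul_of_nonneg_right hcard hb0
    _ = (Q:ℝ) * ((Q:ℝ) * b) := by rw [Finset.sum_const, card_cell hQ0, nsmul_eq_mul]
    _ = 2 * (Q:ℝ)^3 * l / L^2 := by rw [hb]; ring
end


/-- uniform bound on the long-range Mayer terms
`f^l_{jk}(σ) = exp(-β Δ_{jk}J(σ)) - 1`. -/
theorem statement9 (M Q : ℕ) (hM : 1 ≤ M) (hQ : 2 ≤ Q)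
    (β : ℝ) (hβ : 0 < β) (L l : ℝ) (hL : 0 < L) (hl : 0 ≤ l)
    (V : ℝ → ℝ) (hV : ∀ a b : ℝ, 0 ≤ a → 0 ≤ b → |V a - V b| ≤ l * |a - b|)
    (J : ℤ → ℝ) (hJ : ∀ r : ℤ, J r = (1 / L) * V (|(r : ℝ)| / L)) :
    ∀ σ : Fin (M * Q) → Bool, ∀ j k : Fin M, j ≤ k →
      |Real.exp (-β * DeltaJ M Q J j k σ) - 1|
        ≤ Real.exp (2 * β * (Q : ℝ) ^ 3 * l / L ^ 2) - 1 := by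
  intro σ j k _
  have hΔ := delta_bound hL hl hV hJ hQ j k σ
  set t := -β * DeltaJ M Q J j k σ with ht
  have htb : |t| ≤ 2 * β * (Q:ℝ)^3 * l / L^2 := by
    rw [ht, abs_mul, abs_neg, abs_of_pos hβ]
    calc β * |DeltaJ M Q J j k σ| ≤ β * (2*(Q:ℝ)^3*l/L^2) :=
          mul_le_mul_of_nonneg_left hΔ hβ.le
      _ = 2*β*(Q:ℝ)^3*l/L^2 := by ring
  have h1 : |Real.exp t - 1| ≤ Real.exp |t| - 1 := by
    have ha := Real.add_one_le_exp t
    have hc := Real.add_one_le_exp |t|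
    rw [abs_le]
    constructor <;>
      linarith [Real.exp_le_exp.mpr (le_abs_self t), neg_le_abs t]
  exact h1.trans (sub_le_sub_right (Real.exp_le_exp.mpr htb) 1)
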